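/- Let p be a permutation pattern and let op_{n,k}(p) denote the number of ordered set partitions of {1,...,n} into k blocks avoiding p, and let W_j(n,p) denote the number of words of length n over the alphabet {1,...,j} avoiding p. Then for all n ≥ k ≥ 1, op_{n,k}(p) = Σ_{j=1}^{k} C(k,j) (-1)^{k-j} W_j(n, p^{-1}), where p^{-1} is the inverse permutation of p. -/

import Mathlib

open Finset BigOperators

/-- A word `w` of length `n` over the alphabet `[k]` contains the permutation
pattern `p` of length `m`. -/
def WordContains {n k m : ℕ} (w : Fin n → Fin k) (p : Equiv.Perm (Fin m)) : Prop :=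
  ∃ ι : Fin m → Fin n, StrictMono ι ∧ ∀ a b : Fin m, w (ι a) < w (ι b) ↔ p a < p b

/-- The number of words of length `n` over the alphabet `[k]` avoiding the pattern `p`. -/
noncomputable def wordAvoidCount (n k m : ℕ) (p : Equiv.Perm (Fin m)) : ℕ :=
  Nat.card {w : Fin n → Fin k // ¬ WordContains w p}

/-- An ordered set partition of `[n]` into `k` blocks. -/
structure OrdPartition (n k : ℕ) where
  blocks : Fin k → Finset (Fin n)
  blocks_nonempty : ∀ i, (blocks i).Nonempty
  blocks_disjoint : ∀ i j, i ≠ j → Disjoint (blocks i) (blocks j)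
  blocks_cover : ∀ x : Fin n, ∃ i, x ∈ blocks i

/-- An ordered set partition contains the permutation pattern `p`. -/
def OPContains {n k m : ℕ} (P : OrdPartition n k) (p : Equiv.Perm (Fin m)) : Prop :=
  ∃ ι : Fin m → Fin k, StrictMono ι ∧ ∃ b : Fin m → Fin n,
    (∀ j, b j ∈ P.blocks (ι j)) ∧ ∀ a c : Fin m, b a < b c ↔ p a < p c

/-- The number of ordered set partitions of `[n]` into `k` blocks avoiding `p`. -/
noncomputable def opAvoidCount (n k m : ℕ) (p : Equiv.Perm (Fin m)) : ℕ :=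
  Nat.card {P : OrdPartition n k // ¬ OPContains P p}

/-- The pattern 321. -/
def p321 : Equiv.Perm (Fin 3) := Fin.revPerm

/-! ### Binomial inversion -/

lemma aux_inner_sum (k i : ℕ) (hik : i ≤ k) :
    ∑ j ∈ Finset.Icc i k, (k.choose j : ℤ) * (-1)^(k-j) * (j.choose i) =
      if i = k then 1 else 0 := by
  have h1 : ∀ j ∈ Finset.Icc i k, (k.choose j : ℤ) * (-1)^(k-j) * (j.choose i)
      = (k.choose i : ℤ) * ((-1)^(k-j) * ((k-i).choose (j-i))) := by
    intro j hj
    simp only [Finset.mem_Icc] at hj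
    have := Nat.choose_mul (n := k) hj.1
    have : (k.choose j : ℤ) * (j.choose i) = (k.choose i : ℤ) * ((k-i).choose (j-i)) := by
      exact_mod_cast congrArg (Nat.cast : ℕ → ℤ) this
    rw [mul_right_comm, this]; ring
  rw [Finset.sum_congr rfl h1, ← Finset.mul_sum]
  have h2 : ∑ j ∈ Finset.Icc i k, ((-1:ℤ)^(k-j) * ((k-i).choose (j-i)))
      = ∑ d ∈ Finset.range (k-i+1), ((-1:ℤ)^(k-i-d) * ((k-i).choose d)) := by
    rw [Finset.sum_bij (fun j _ => j - i)]
    · intro j hj; simp only [Finset.mem_Icc] at hj; simp only [Finset.mem_range]; omega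
    · intro a ha b hb h; simp only [Finset.mem_Icc] at ha hb; omega
    · intro d hd; simp only [Finset.mem_range] at hd
      exact ⟨d + i, by simp only [Finset.mem_Icc]; omega, by omega⟩
    · intro j hj; simp only [Finset.mem_Icc] at hj
      congr 2; omega
  rw [h2]
  have h3 : ∑ d ∈ Finset.range (k-i+1), ((-1:ℤ)^(k-i-d) * ((k-i).choose d))
      = (-1)^(k-i) * ∑ d ∈ Finset.range (k-i+1), ((-1:ℤ)^d * ((k-i).choose d)) := by
    rw [Finset.mul_sum]
    refine Finset.sum_congr rfl fun d hd => ?_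
    simp only [Finset.mem_range] at hd
    have e : (-1:ℤ)^(k-i) * (-1)^d = (-1)^(k-i-d) := by
      rw [← pow_add, (by omega : (k-i) + d = (k - i - d) + 2*d), pow_add, pow_mul]
      simp
    rw [← e]; ring
  rw [h3, Int.alternating_sum_range_choose]
  rcases eq_or_ne i k with h | h
  · simp [h]
  · have : k - i ≠ 0 := by omega
    simp [this, if_neg h]

lemma binomial_inversion (f g : ℕ → ℤ)
    (h : ∀ k, f k = ∑ j ∈ Finset.range (k+1), (k.choose j : ℤ) * g j) (k : ℕ) :
    g k = ∑ j ∈ Finset.range (k+1), (k.choose j : ℤ) * (-1)^(k-j) * f j := by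
  have key : ∑ j ∈ Finset.range (k+1), (k.choose j : ℤ) * (-1)^(k-j) * f j
      = ∑ i ∈ Finset.range (k+1), (if i = k then 1 else 0) * g i := by
    calc ∑ j ∈ Finset.range (k+1), (k.choose j : ℤ) * (-1)^(k-j) * f j
        = ∑ j ∈ Finset.Ico 0 (k+1), ∑ i ∈ Finset.Ico 0 (j+1),
            (k.choose j : ℤ) * (-1)^(k-j) * ((j.choose i : ℤ) * g i) := by
          refine Finset.sum_congr (by rw [Finset.range_eq_Ico]) fun j hj => ?_
          rw [h j, Finset.mul_sum, Finset.range_eq_Ico]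
      _ = ∑ i ∈ Finset.Ico 0 (k+1), ∑ j ∈ Finset.Ico i (k+1),
            (k.choose j : ℤ) * (-1)^(k-j) * ((j.choose i : ℤ) * g i) := by
          rw [Finset.sum_Ico_Ico_comm]
      _ = ∑ i ∈ Finset.range (k+1), (if i = k then 1 else 0) * g i := by
          refine Finset.sum_congr (by rw [Finset.range_eq_Ico]) fun i hi => ?_
          simp only [Finset.mem_range] at hi
          rw [Finset.Ico_add_one_right_eq_Icc, ← aux_inner_sum k i (by omega), Finset.sum_mul]
          refine Finset.sum_congr rfl fun j hj => by ring
  rw [key]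
  have : ∀ i ∈ Finset.range (k+1), (if i = k then (1:ℤ) else 0) * g i = if i = k then g i else 0 := by
    intro i _; split <;> ring
  rw [Finset.sum_congr rfl this, Finset.sum_ite_eq' (Finset.range (k+1)) k g]
  simp

/-! ### Transport of word containment along order embeddings -/

lemma wc_comp {n j K m : ℕ} (q : Equiv.Perm (Fin m)) (f : Fin j → Fin K)
    (hf : ∀ a b, f a < f b ↔ a < b) (w : Fin n → Fin j) :
    WordContains (fun i => f (w i)) q ↔ WordContains w q := by
  constructor
  · rintro ⟨ι, hι, hcmp⟩
    exact ⟨ι, hι, fun a b => by rw [← hcmp a b]; exact (hf _ _).symm⟩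
  · rintro ⟨ι, hι, hcmp⟩
    exact ⟨ι, hι, fun a b => by rw [← hcmp a b]; exact hf _ _⟩

/-! ### Ordered partitions vs surjective words -/

lemma OrdPartition.blocks_ext {n k : ℕ} {P Q : OrdPartition n k}
    (h : P.blocks = Q.blocks) : P = Q := by
  cases P; cases Q; cases h; rfl

noncomputable def toWord {n k : ℕ} (P : OrdPartition n k) (x : Fin n) : Fin k :=
  (P.blocks_cover x).choose

lemma mem_blocks_iff {n k : ℕ} (P : OrdPartition n k) (x : Fin n) (i : Fin k) :
    x ∈ P.blocks i ↔ toWord P x = i := by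
  constructor
  · intro hx
    by_contra hne
    exact Finset.disjoint_left.mp (P.blocks_disjoint _ i hne)
      (P.blocks_cover x).choose_spec hx
  · rintro rfl
    exact (P.blocks_cover x).choose_spec

lemma toWord_surj {n k : ℕ} (P : OrdPartition n k) : Function.Surjective (toWord P) := by
  intro i
  obtain ⟨x, hx⟩ := P.blocks_nonempty i
  exact ⟨x, (mem_blocks_iff P x i).mp hx⟩

lemma contains_iff {n k m : ℕ} (p : Equiv.Perm (Fin m)) (P : OrdPartition n k)
    (w : Fin n → Fin k) (hw : ∀ x i, x ∈ P.blocks i ↔ w x = i) :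
    OPContains P p ↔ WordContains w p⁻¹ := by
  constructor
  · rintro ⟨ι, hι, b, hb, hcmp⟩
    have h1 : ∀ j, w (b j) = ι j := fun j => (hw _ _).mp (hb j)
    refine ⟨fun a => b (p⁻¹ a), ?_, ?_⟩
    · intro a c hac
      rw [hcmp]; simpa using hac
    · intro a c
      rw [h1, h1, hι.lt_iff_lt]
  · rintro ⟨κ, hκ, hcmp⟩
    refine ⟨fun j => w (κ (p j)), ?_, fun j => κ (p j), fun j => (hw _ _).mpr rfl, ?_⟩
    · intro a c hac
      rw [hcmp]; simpa using hac
    · intro a c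
      rw [hκ.lt_iff_lt]

noncomputable def fromWord {n k : ℕ} (w : Fin n → Fin k) (hs : Function.Surjective w) :
    OrdPartition n k where
  blocks i := Finset.univ.filter (fun x => w x = i)
  blocks_nonempty i := by
    obtain ⟨x, hx⟩ := hs i
    exact ⟨x, by simp [hx]⟩
  blocks_disjoint i j hij := by
    simp only [Finset.disjoint_left, Finset.mem_filter]
    rintro x ⟨-, h1⟩ ⟨-, h2⟩
    exact hij (h1 ▸ h2 ▸ rfl)
  blocks_cover x := ⟨w x, by simp⟩

lemma fromWord_mem {n k : ℕ} (w : Fin n → Fin k) (hs : Function.Surjective w)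
    (x : Fin n) (i : Fin k) : x ∈ (fromWord w hs).blocks i ↔ w x = i := by
  simp [fromWord]

noncomputable def opEquiv {n k m : ℕ} (p : Equiv.Perm (Fin m)) :
    {P : OrdPartition n k // ¬ OPContains P p} ≃
      {w : Fin n → Fin k // Function.Surjective w ∧ ¬ WordContains w p⁻¹} where
  toFun P := ⟨toWord P.1, toWord_surj P.1,
    fun hc => P.2 ((contains_iff p P.1 _ (mem_blocks_iff P.1)).mpr hc)⟩
  invFun w := ⟨fromWord w.1 w.2.1,
    fun hc => w.2.2 ((contains_iff p _ w.1 (fromWord_mem w.1 w.2.1)).mp hc)⟩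
  left_inv P := by
    refine Subtype.ext (OrdPartition.blocks_ext (funext fun i => ?_))
    ext x
    rw [fromWord_mem, ← mem_blocks_iff]
  right_inv w := by
    refine Subtype.ext (funext fun x => ?_)
    have : x ∈ (fromWord w.1 w.2.1).blocks (w.1 x) := by rw [fromWord_mem]
    exact (mem_blocks_iff _ x _).mp this

/-! ### Counting words by image -/

lemma nat_card_sigma {ι : Type*} [Fintype ι] (f : ι → Type*) [∀ i, Finite (f i)] :
    Nat.card (Σ i, f i) = ∑ i, Nat.card (f i) := by
  letI : ∀ i, Fintype (f i) := fun i => Fintype.ofFinite _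
  simp [Nat.card_eq_fintype_card]

lemma memS {n K : ℕ} (s : Finset (Fin K)) (w : Fin n → Fin K)
    (him : Finset.image w Finset.univ = s) (i : Fin n) : w i ∈ s := by
  have : w i ∈ Finset.image w Finset.univ := Finset.mem_image_of_mem _ (Finset.mem_univ i)
  rwa [him] at this

lemma iso_mono {K : ℕ} (s : Finset (Fin K)) (a b : Fin s.card) :
    ((s.orderIsoOfFin rfl) a : Fin K) < ((s.orderIsoOfFin rfl) b : Fin K) ↔ a < b :=
  Subtype.coe_lt_coe.trans (OrderIso.lt_iff_lt _)

noncomputable def restrictEquiv {n K m : ℕ} (q : Equiv.Perm (Fin m)) (s : Finset (Fin K)) :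
    {w : Fin n → Fin K // ¬ WordContains w q ∧ Finset.image w Finset.univ = s} ≃
      {w : Fin n → Fin s.card // Function.Surjective w ∧ ¬ WordContains w q} where
  toFun x := ⟨fun i => (s.orderIsoOfFin rfl).symm ⟨x.1 i, memS s x.1 x.2.2 i⟩,
    by
      intro a
      have hmem : ((s.orderIsoOfFin rfl) a : Fin K) ∈ Finset.image x.1 Finset.univ := by
        rw [x.2.2]; exact ((s.orderIsoOfFin rfl) a).2
      obtain ⟨i, -, hi⟩ := Finset.mem_image.mp hmem
      refine ⟨i, ?_⟩
      have h2 : (⟨x.1 i, memS s x.1 x.2.2 i⟩ : {z // z ∈ s}) = (s.orderIsoOfFin rfl) a :=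
        Subtype.ext hi
      show (s.orderIsoOfFin rfl).symm ⟨x.1 i, memS s x.1 x.2.2 i⟩ = a
      rw [h2, OrderIso.symm_apply_apply],
    by
      intro hc
      apply x.2.1
      have hx : x.1 = fun i => (((s.orderIsoOfFin rfl)
          ((s.orderIsoOfFin rfl).symm ⟨x.1 i, memS s x.1 x.2.2 i⟩) : {z // z ∈ s}) : Fin K) := by
        funext i
        rw [OrderIso.apply_symm_apply]
      rw [hx, wc_comp q _ (iso_mono s)]
      exact hc⟩
  invFun y := ⟨fun i => ((s.orderIsoOfFin rfl) (y.1 i) : Fin K),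
    by
      intro hc
      exact y.2.2 ((wc_comp q _ (iso_mono s) y.1).mp hc),
    by
      ext z
      simp only [Finset.mem_image, Finset.mem_univ, true_and]
      constructor
      · rintro ⟨i, rfl⟩; exact ((s.orderIsoOfFin rfl) (y.1 i)).2
      · intro hz
        obtain ⟨i, hi⟩ := y.2.1 ((s.orderIsoOfFin rfl).symm ⟨z, hz⟩)
        refine ⟨i, ?_⟩
        rw [hi, OrderIso.apply_symm_apply]⟩
  left_inv x := by
    refine Subtype.ext (funext fun i => ?_)
    show (((s.orderIsoOfFin rfl) ((s.orderIsoOfFin rfl).symm ⟨x.1 i, _⟩) : {z // z ∈ s}) : Fin K)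
      = x.1 i
    rw [OrderIso.apply_symm_apply]
  right_inv y := by
    refine Subtype.ext (funext fun i => ?_)
    exact (s.orderIsoOfFin rfl).symm_apply_apply (y.1 i)

lemma word_count_eq_sum_surj (n K m : ℕ) (q : Equiv.Perm (Fin m)) :
    wordAvoidCount n K m q = ∑ i ∈ Finset.range (K+1),
      K.choose i * Nat.card {w : Fin n → Fin i // Function.Surjective w ∧ ¬ WordContains w q} := by
  classical
  have e1 : {w : Fin n → Fin K // ¬ WordContains w q} ≃
      Σ s : Finset (Fin K), {w : Fin n → Fin K // ¬ WordContains w q ∧ Finset.image w Finset.univ = s} :=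
    ((Equiv.sigmaFiberEquiv (fun (w : {w : Fin n → Fin K // ¬ WordContains w q}) =>
      Finset.image w.1 Finset.univ)).symm).trans
      (Equiv.sigmaCongrRight fun s => Equiv.subtypeSubtypeEquivSubtypeInter
        (fun w => ¬ WordContains w q) (fun w => Finset.image w Finset.univ = s))
  rw [wordAvoidCount, Nat.card_congr e1, nat_card_sigma]
  have e2 : ∀ s : Finset (Fin K),
      Nat.card {w : Fin n → Fin K // ¬ WordContains w q ∧ Finset.image w Finset.univ = s}
        = Nat.card {w : Fin n → Fin s.card // Function.Surjective w ∧ ¬ WordContains w q} :=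
    fun s => Nat.card_congr (restrictEquiv q s)
  rw [Finset.sum_congr rfl (fun s _ => e2 s)]
  rw [← Finset.powerset_univ, Finset.sum_powerset_apply_card
    (fun i => Nat.card {w : Fin n → Fin i // Function.Surjective w ∧ ¬ WordContains w q})]
  simp [Finset.card_univ, smul_eq_mul]

theorem op_eq_alternating_sum_words (m : ℕ) (p : Equiv.Perm (Fin m)) (n k : ℕ)
    (hk : 1 ≤ k) (hkn : k ≤ n) :
    (opAvoidCount n k m p : ℤ) =
      ∑ j ∈ Finset.Icc 1 k,
        (Nat.choose k j : ℤ) * (-1) ^ (k - j) * (wordAvoidCount n j m p⁻¹ : ℤ) := by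
  set S : ℕ → ℤ := fun j =>
    (Nat.card {w : Fin n → Fin j // Function.Surjective w ∧ ¬ WordContains w p⁻¹} : ℤ) with hS
  have hA : ∀ K, (wordAvoidCount n K m p⁻¹ : ℤ) =
      ∑ j ∈ Finset.range (K+1), (K.choose j : ℤ) * S j := by
    intro K
    rw [word_count_eq_sum_surj n K m p⁻¹]
    push_cast
    rfl
  have hinv := binomial_inversion (fun K => (wordAvoidCount n K m p⁻¹ : ℤ)) S hA k
  have hop : (opAvoidCount n k m p : ℤ) = S k := by
    simp only [hS, opAvoidCount]
    exact_mod_cast congrArg (Nat.cast : ℕ → ℤ) (Nat.card_congr (opEquiv p))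
  rw [hop, hinv]
  have hzero : (wordAvoidCount n 0 m p⁻¹ : ℤ) = 0 := by
    have : IsEmpty {w : Fin n → Fin 0 // ¬ WordContains w p⁻¹} := by
      refine ⟨fun w => ?_⟩
      exact (w.1 ⟨0, by omega⟩).elim0
    simp [wordAvoidCount, Nat.card_of_isEmpty]
  have hsplit : Finset.range (k+1) = insert 0 (Finset.Icc 1 k) := by
    ext x; simp [Finset.mem_range, Finset.mem_Icc, Finset.mem_insert]; omega
  rw [hsplit, Finset.sum_insert (by simp)]
  rw [hzero]
  ring
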